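/- If ρ is a bounded positive operator on H with ⟨ρ1,1⟩ = 1 and ρ is an extreme point of the set of q-probability operators, then the spectrum of ρ consists of a single point, i.e., ρ = αP for a projection P and α > 0. -/

import Mathlib

local notation "⟪" x ", " y "⟫" => @inner ℂ _ _ x y

/-- Extreme point property forces every "cut" of ρ by functional calculus to be
proportional to ρ on the spectrum. -/
lemma stmt6_aux {H : Type*} [NormedAddCommGroup H] [InnerProductSpace ℂ H] [CompleteSpace H]
    (one : H)
    (ρ : H →L[ℂ] H) (hρ : ρ.IsPositive) (hn : ⟪ρ one, one⟫ = 1)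
    (hext : ∀ (ρ₁ ρ₂ : H →L[ℂ] H), ρ₁.IsPositive → ρ₂.IsPositive →
      ⟪ρ₁ one, one⟫ = 1 → ⟪ρ₂ one, one⟫ = 1 →
      ∀ l : ℝ, 0 < l → l < 1 → ρ = (l : ℂ) • ρ₁ + ((1 - l : ℝ) : ℂ) • ρ₂ → ρ₁ = ρ₂)
    (h : ℝ → ℝ) (hc : Continuous h) (h0 : ∀ x, 0 ≤ h x) (h1 : ∀ x, h x ≤ 1) :
    ∃ a : ℝ, ∀ x ∈ spectrum ℝ ρ, x * h x = a * x := by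
  have hsa : IsSelfAdjoint ρ := hρ.isSelfAdjoint
  have hρ0 : (0 : H →L[ℂ] H) ≤ ρ := (ContinuousLinearMap.nonneg_iff_isPositive ρ).mpr hρ
  have hsp : ∀ x ∈ spectrum ℝ ρ, 0 ≤ x := fun x hx => spectrum_nonneg_of_nonneg hρ0 hx
  set T : H →L[ℂ] H := cfc (fun x : ℝ => x * h x) ρ with hT
  have hTpos : T.IsPositive := by
    rw [← ContinuousLinearMap.nonneg_iff_isPositive]
    exact cfc_nonneg fun x hx => mul_nonneg (hsp x hx) (h0 x)
  set S : H →L[ℂ] H := cfc (fun x : ℝ => x * (1 - h x)) ρ with hS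
  have hSpos : S.IsPositive := by
    rw [← ContinuousLinearMap.nonneg_iff_isPositive]
    exact cfc_nonneg fun x hx => mul_nonneg (hsp x hx) (by linarith [h1 x])
  have hTS : T + S = ρ := by
    rw [hT, hS, ← cfc_add (a := ρ) _ _ (by fun_prop) (by fun_prop)]
    calc cfc (fun x : ℝ => x * h x + x * (1 - h x)) ρ = cfc (fun x : ℝ => x) ρ := by
          apply cfc_congr; intro x _; ring
      _ = ρ := cfc_id' ℝ ρ
  -- the numbers
  obtain ⟨haT, haT0⟩ := (ContinuousLinearMap.isPositive_iff_complex T).mp hTpos one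
  obtain ⟨haS, haS0⟩ := (ContinuousLinearMap.isPositive_iff_complex S).mp hSpos one
  set a : ℝ := RCLike.re ⟪T one, one⟫ with ha
  have hTinner : ⟪T one, one⟫ = (a : ℂ) := haT.symm
  have hSinner : ⟪S one, one⟫ = ((1 - a : ℝ) : ℂ) := by
    have : ⟪T one, one⟫ + ⟪S one, one⟫ = 1 := by
      rw [← inner_add_left, ← ContinuousLinearMap.add_apply, hTS, hn]
    rw [hTinner] at this
    push_cast
    linear_combination this
  have ha1 : a ≤ 1 := by
    have : RCLike.re ⟪S one, one⟫ = 1 - a := by rw [hSinner]; simp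
    linarith [this ▸ haS0]
  -- the two decomposing operators
  set ρ₁ : H →L[ℂ] H := cfc (fun x : ℝ => x * h x + (1 - a) * x) ρ with hρ₁
  set ρ₂ : H →L[ℂ] H := cfc (fun x : ℝ => (1 + a) * x - x * h x) ρ with hρ₂
  have hρ₁eq : ρ₁ = T + (1 - a) • ρ := by
    rw [hρ₁, cfc_add (a := ρ) (fun x : ℝ => x * h x) (fun x : ℝ => (1 - a) * x) (by fun_prop) (by fun_prop),
      cfc_const_mul_id _ ρ]
  have hρ₂eq : ρ₂ = (1 + a) • ρ - T := by
    rw [hρ₂, cfc_sub (f := fun x : ℝ => (1 + a) * x) (g := fun x : ℝ => x * h x) (a := ρ),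
      cfc_const_mul_id _ ρ]
  have hρ₁pos : ρ₁.IsPositive := by
    rw [← ContinuousLinearMap.nonneg_iff_isPositive, hρ₁]
    exact cfc_nonneg fun x hx => by nlinarith [hsp x hx, h0 x, h1 x]
  have hρ₂pos : ρ₂.IsPositive := by
    rw [← ContinuousLinearMap.nonneg_iff_isPositive, hρ₂]
    exact cfc_nonneg fun x hx => by nlinarith [hsp x hx, h0 x, h1 x, haT0]
  have hstar : ∀ (r : ℝ) (x : H), (r • x : H) = ((r : ℂ) • x : H) := fun r x =>
    (Complex.coe_smul r x).symm
  have hn₁ : ⟪ρ₁ one, one⟫ = 1 := by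
    rw [hρ₁eq]
    simp only [ContinuousLinearMap.add_apply, ContinuousLinearMap.smul_apply, inner_add_left,
      hstar, inner_smul_left, hTinner, hn]
    push_cast
    simp [Complex.conj_ofReal]
  have hn₂ : ⟪ρ₂ one, one⟫ = 1 := by
    rw [hρ₂eq]
    simp only [ContinuousLinearMap.sub_apply, ContinuousLinearMap.smul_apply, inner_sub_left,
      hstar, inner_smul_left, hTinner, hn]
    push_cast
    simp [Complex.conj_ofReal]
  have hdecomp : ρ = ((1/2 : ℝ) : ℂ) • ρ₁ + ((1 - 1/2 : ℝ) : ℂ) • ρ₂ := by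
    rw [hρ₁eq, hρ₂eq, Complex.coe_smul, Complex.coe_smul]
    module
  have heq := hext ρ₁ ρ₂ hρ₁pos hρ₂pos hn₁ hn₂ (1/2) (by norm_num) (by norm_num) hdecomp
  have hTa : T = a • ρ := by
    rw [hρ₁eq, hρ₂eq] at heq
    have key : (2 : ℝ) • T = (2 : ℝ) • (a • ρ) := by
      rw [eq_sub_iff_add_eq] at heq
      calc (2 : ℝ) • T = T + T := two_smul ℝ T
        _ = (1 + a) • ρ - (1 - a) • ρ := by
            rw [← heq]; abel
        _ = (2 : ℝ) • (a • ρ) := by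
            rw [← sub_smul, smul_smul]; norm_num; ring_nf
    exact smul_right_injective _ (two_ne_zero) key
  refine ⟨a, ?_⟩
  have : cfc (fun x : ℝ => x * h x) ρ = cfc (fun x : ℝ => a * x) ρ := by
    rw [← hT, hTa, cfc_const_mul_id _ ρ]
  exact fun x hx => eqOn_of_cfc_eq_cfc this (by fun_prop) (by fun_prop) hsa hx

/-- If ρ is a q-probability operator that is an extreme point of the set of
q-probability operators, then ρ = α P for a projection P and α > 0 (so the
spectrum of ρ consists of a single nonzero point). -/
theorem stmt6 {H : Type*} [NormedAddCommGroup H] [InnerProductSpace ℂ H] [CompleteSpace H]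
    (one : H) (hone : ‖one‖ = 1)
    (ρ : H →L[ℂ] H) (hρ : ρ.IsPositive) (hn : ⟪ρ one, one⟫ = 1)
    (hext : ∀ (ρ₁ ρ₂ : H →L[ℂ] H), ρ₁.IsPositive → ρ₂.IsPositive →
      ⟪ρ₁ one, one⟫ = 1 → ⟪ρ₂ one, one⟫ = 1 →
      ∀ l : ℝ, 0 < l → l < 1 → ρ = (l : ℂ) • ρ₁ + ((1 - l : ℝ) : ℂ) • ρ₂ → ρ₁ = ρ₂) :
    ∃ (α : ℝ) (P : H →L[ℂ] H), 0 < α ∧ IsIdempotentElem P ∧ IsSelfAdjoint P ∧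
      ρ = (α : ℂ) • P := by
  have hsa : IsSelfAdjoint ρ := hρ.isSelfAdjoint
  have hρ0 : (0 : H →L[ℂ] H) ≤ ρ := (ContinuousLinearMap.nonneg_iff_isPositive ρ).mpr hρ
  have hsp : ∀ x ∈ spectrum ℝ ρ, 0 ≤ x := fun x hx => spectrum_nonneg_of_nonneg hρ0 hx
  -- there is a nonzero spectral value
  obtain ⟨α, hαmem, hα0⟩ : ∃ α ∈ spectrum ℝ ρ, α ≠ 0 := by
    by_contra hcon
    push_neg at hcon
    have hzero : ρ = 0 := by
      have : cfc (fun x : ℝ => x) ρ = cfc (fun _ : ℝ => (0 : ℝ)) ρ :=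
        cfc_congr fun x hx => hcon x hx
      rwa [cfc_id' ℝ ρ, cfc_const_zero ℝ ρ] at this
    rw [hzero] at hn
    simp at hn
  have hαpos : 0 < α := lt_of_le_of_ne (hsp α hαmem) (Ne.symm hα0)
  -- every nonzero spectral value equals α
  have huniq : ∀ β ∈ spectrum ℝ ρ, β ≠ 0 → β = α := by
    intro β hβmem hβ0
    by_contra hβα
    set h : ℝ → ℝ := fun x => min 1 (|x - β| / |α - β|) with hh
    have hαβ : |α - β| ≠ 0 := by
      simp only [ne_eq, abs_eq_zero, sub_eq_zero]
      exact fun e => hβα (e ▸ rfl)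
    have hc : Continuous h := by
      apply Continuous.min continuous_const
      exact ((continuous_id.sub continuous_const).abs).div_const _
    have h0 : ∀ x, 0 ≤ h x := fun x =>
      le_min zero_le_one (div_nonneg (abs_nonneg _) (abs_nonneg _))
    have h1 : ∀ x, h x ≤ 1 := fun x => min_le_left _ _
    obtain ⟨c, hc'⟩ := stmt6_aux one ρ hρ hn hext h hc h0 h1
    have hα' := hc' α hαmem
    have hβ' := hc' β hβmem
    have hhα : h α = 1 := by
      rw [hh]; simp only
      rw [div_self hαβ, min_self]
    have hhβ : h β = 0 := by
      rw [hh]; simp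
    rw [hhα] at hα'
    rw [hhβ] at hβ'
    have hc1 : c = 1 := by
      have : c * α = 1 * α := by rw [one_mul, ← hα', mul_one]
      exact mul_right_cancel₀ hα0 this
    have hc0 : c = 0 := by
      have : c * β = 0 := by rw [← hβ', mul_zero]
      rcases mul_eq_zero.mp this with h' | h'
      · exact h'
      · exact absurd h' hβ0
    rw [hc1] at hc0
    norm_num at hc0
  -- hence ρ² = αρ
  have hsq : ρ * ρ = (α : ℝ) • ρ := by
    have e1 : cfc (fun x : ℝ => x * x) ρ = ρ * ρ := by
      rw [cfc_mul (fun x : ℝ => x) (fun x : ℝ => x) ρ, cfc_id' ℝ ρ]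
    have e2 : cfc (fun x : ℝ => x * x) ρ = cfc (fun x : ℝ => α * x) ρ := by
      apply cfc_congr
      intro x hx
      by_cases hx0 : x = 0
      · simp [hx0]
      · rw [huniq x hx hx0]
    rw [← e1, e2, cfc_const_mul_id _ ρ]
  have hαℂ : (α : ℂ) ≠ 0 := by exact_mod_cast hα0
  refine ⟨α, ((α : ℂ))⁻¹ • ρ, hαpos, ?_, ?_, ?_⟩
  · show ((α : ℂ))⁻¹ • ρ * ((α : ℂ))⁻¹ • ρ = ((α : ℂ))⁻¹ • ρ
    have hsq' : ρ * ρ = (α : ℂ) • ρ := by rw [hsq, ← Complex.coe_smul]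
    rw [smul_mul_assoc, mul_smul_comm, hsq', smul_smul, smul_smul]
    congr 1
    field_simp
  · show star (((α : ℂ))⁻¹ • ρ) = ((α : ℂ))⁻¹ • ρ
    rw [star_smul, hsa.star_eq]
    congr 1
    simp [star_inv₀, Complex.star_def, Complex.conj_ofReal]
  · rw [smul_smul, mul_inv_cancel₀ hαℂ, one_smul]
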